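/- Let a_1,…,a_m, B, K be positive integers with ∑ a_i ≤ B·K, set N = B·K, M = ∑_{i=1}^{m}(a_i − 1), and p_i = a_1 + … + a_i (p_0 = 0). Define a virtual line on vertices 1,…,N where the edge {j, j+1} has demand w_j = 1 if j and j+1 lie in the same element section (there exists i with p_{i−1} + 1 ≤ j and j + 1 ≤ p_{i−1} + a_i) and w_j = 0 otherwise; define a physical line on vertices 1,…,N where the edge {k, k+1} has capacity 0 if B divides k and capacity M otherwise. Then the indices {1,…,m} can be partitioned into K subsets each with ∑ a_i at most B if and only if there exists a bijection f : {1,…,N} → {1,…,N} such that for every k ∈ {1,…,N−1}, ∑ of w_j over all j with min(f(j), f(j+1)) ≤ k < max(f(j), f(j+1)) is at most the capacity of the edge {k, k+1}. (This establishes that cVNE of a linear virtual network on a linear physical network is NP-complete.) -/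

import Mathlib

open Classical Finset


def pp (a : ℕ → ℕ) (i : ℕ) : ℕ := ∑ l ∈ Finset.Icc 1 i, a l

lemma pp_def (a : ℕ → ℕ) (i : ℕ) : ∑ l ∈ Finset.Icc 1 i, a l = pp a i := rfl

lemma pp_succ (a : ℕ → ℕ) {i : ℕ} (hi : 1 ≤ i) : pp a i = pp a (i-1) + a i := by
  obtain ⟨n, rfl⟩ : ∃ n, i = n + 1 := ⟨i - 1, by omega⟩
  simp [pp, Finset.sum_Icc_succ_top (by omega : 1 ≤ n + 1)]

lemma pp_mono (a : ℕ → ℕ) : Monotone (pp a) := fun i i' h =>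
  Finset.sum_le_sum_of_subset (Finset.Icc_subset_Icc_right h)

lemma pred_mul_add {k B : ℕ} (hk : 1 ≤ k) : (k-1)*B + B = k*B := by
  calc (k-1)*B + B = ((k-1)+1)*B := by ring
  _ = k*B := by rw [Nat.sub_add_cancel hk]

-- uniqueness of sections
lemma sec_unique (a : ℕ → ℕ) {m i i' j : ℕ} (hi : i ∈ Finset.Icc 1 m)
    (hi' : i' ∈ Finset.Icc 1 m) (h1 : pp a (i-1) < j) (h2 : j ≤ pp a i)
    (h1' : pp a (i'-1) < j) (h2' : j ≤ pp a i') : i = i' := by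
  by_contra hne
  rcases Nat.lt_or_ge i i' with h | h
  · exact absurd (h2.trans (pp_mono a (by omega : i ≤ i' - 1))) (by omega)
  · exact absurd (h2'.trans (pp_mono a (by omega : i' ≤ i - 1))) (by omega)

-- every j in [1, pp a m] lies in some section
lemma exists_sec (a : ℕ → ℕ) {m j : ℕ} (hm : 1 ≤ m) (hj1 : 1 ≤ j) (hj2 : j ≤ pp a m) :
    ∃ i, i ∈ Finset.Icc 1 m ∧ pp a (i-1) < j ∧ j ≤ pp a i := by
  have hex : ∃ i, 1 ≤ i ∧ j ≤ pp a i := ⟨m, hm, hj2⟩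
  classical
  let i := Nat.find hex
  obtain ⟨hi1, hi2⟩ := Nat.find_spec hex
  have him : i ≤ m := Nat.find_min' hex ⟨hm, hj2⟩
  refine ⟨i, Finset.mem_Icc.mpr ⟨hi1, him⟩, ?_, hi2⟩
  rcases Nat.eq_or_lt_of_le hi1 with h1 | h1
  · have : pp a 0 = 0 := by simp [pp]
    rw [show i - 1 = 0 by omega, this]; omega
  · have := Nat.find_min hex (show i - 1 < i by omega)
    push_neg at this
    exact this (by omega)

def blockOf (B x : ℕ) : ℕ := (x-1)/B + 1

lemma blockOf_pos (B x : ℕ) : 1 ≤ blockOf B x := Nat.le_add_left 1 _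

lemma blockOf_upper {B x : ℕ} (hB : 1 ≤ B) : x ≤ blockOf B x * B := by
  have h : x - 1 < ((x-1)/B + 1) * B :=
    (Nat.div_lt_iff_lt_mul (by omega)).mp (Nat.lt_succ_self _)
  unfold blockOf; omega

lemma blockOf_lower {B x : ℕ} (hx : 1 ≤ x) : (blockOf B x - 1) * B + 1 ≤ x := by
  have h : (x-1)/B * B ≤ x - 1 := Nat.div_mul_le_self _ _
  unfold blockOf; simp only [Nat.add_sub_cancel]; omega

lemma blockOf_le_K {B K x : ℕ} (hB : 1 ≤ B) (hK : 1 ≤ K) (hx : x ≤ B * K) :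
    blockOf B x ≤ K := by
  have hKB : K * B = B * K := Nat.mul_comm _ _
  have h : (x-1)/B < K := (Nat.div_lt_iff_lt_mul (by omega)).mpr (by
    have : 0 < B * K := Nat.mul_pos (by omega) (by omega)
    omega)
  unfold blockOf; omega

lemma blockOf_mono {B x y : ℕ} (h : x ≤ y) : blockOf B x ≤ blockOf B y :=
  Nat.add_le_add_right (Nat.div_le_div_right (by omega)) 1

lemma blockOf_eq_iff {B x k : ℕ} (hB : 1 ≤ B) (hx : 1 ≤ x) (hk : blockOf B x = k) :
    (k-1)*B + 1 ≤ x ∧ x ≤ k*B := by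
  subst hk
  exact ⟨blockOf_lower hx, blockOf_upper hB⟩

lemma blockOf_gap {B u v : ℕ} (hB : 1 ≤ B) (hv : 1 ≤ v)
    (h : blockOf B u < blockOf B v) : u ≤ blockOf B u * B ∧ blockOf B u * B < v := by
  refine ⟨blockOf_upper hB, ?_⟩
  have h2 : ((u-1)/B + 1) * B ≤ v - 1 := by
    have : (u-1)/B + 1 ≤ (v-1)/B := by unfold blockOf at h; omega
    exact (Nat.le_div_iff_mul_le (by omega)).mp this
  unfold blockOf; omega

/-- cVNE of a linear virtual network on a linear physical network is
NP-complete: correctness of the reduction from bin packing.  With `N = B·K` and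
`M = ∑ (aᵢ − 1)`, the virtual edge `{j, j+1}` has demand `1` iff `j, j+1` lie in the
same element section, and the physical edge `{k, k+1}` has capacity `0` if `B ∣ k`
and `M` otherwise.  The instance of bin packing is solvable iff there is a
capacity-feasible bijection of `{1,…,N}`. -/
theorem binPacking_iff_line_on_line_cVNE (m B K : ℕ) (hm : 1 ≤ m) (hB : 1 ≤ B)
    (hK : 1 ≤ K) (a : ℕ → ℕ) (ha : ∀ i ∈ Finset.Icc 1 m, 1 ≤ a i)
    (hsum : ∑ i ∈ Finset.Icc 1 m, a i ≤ B * K) :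
    (∃ g : ℕ → ℕ, (∀ i ∈ Finset.Icc 1 m, g i ∈ Finset.Icc 1 K) ∧
        ∀ k ∈ Finset.Icc 1 K,
          ∑ i ∈ (Finset.Icc 1 m).filter (fun i => g i = k), a i ≤ B) ↔
    (∃ f : ℕ → ℕ, Set.BijOn f (Set.Icc 1 (B * K)) (Set.Icc 1 (B * K)) ∧
      ∀ k ∈ Finset.Icc 1 (B * K - 1),
        (∑ j ∈ Finset.Icc 1 (B * K - 1),
          if (min (f j) (f (j + 1)) ≤ k ∧ k < max (f j) (f (j + 1))) then
            (if ∃ i ∈ Finset.Icc 1 m,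
                (∑ l ∈ Finset.Icc 1 (i - 1), a l) + 1 ≤ j ∧
                j + 1 ≤ (∑ l ∈ Finset.Icc 1 (i - 1), a l) + a i
             then 1 else 0)
          else 0) ≤
        (if B ∣ k then 0 else ∑ i ∈ Finset.Icc 1 m, (a i - 1))) := by
  have hppm : pp a m ≤ B * K := hsum
  constructor
  · rintro ⟨g, hg1, hg2⟩
    classical
    set off : ℕ → ℕ := fun i => ∑ i' ∈ (Finset.Icc 1 (i-1)).filter (fun i' => g i' = g i), a i' with hoff
    set pos : ℕ → ℕ → ℕ := fun i j => (g i - 1) * B + off i + (j - pp a (i-1)) with hpos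
    -- bin prefix sums fit
    have hoffB : ∀ i ∈ Finset.Icc 1 m, off i + a i ≤ B := by
      intro i hi
      have hgk := hg1 i hi
      have hnotmem : i ∉ (Finset.Icc 1 (i-1)).filter (fun i' => g i' = g i) := by
        intro h
        have := (Finset.mem_filter.mp h).1
        rw [Finset.mem_Icc] at this
        omega
      have hsub : insert i ((Finset.Icc 1 (i-1)).filter (fun i' => g i' = g i)) ⊆
          (Finset.Icc 1 m).filter (fun i' => g i' = g i) := by
        intro x hx
        rcases Finset.mem_insert.mp hx with rfl | hx
        · exact Finset.mem_filter.mpr ⟨hi, rfl⟩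
        · obtain ⟨hx1, hx2⟩ := Finset.mem_filter.mp hx
          rw [Finset.mem_Icc] at hx1
          have him := (Finset.mem_Icc.mp hi).2
          exact Finset.mem_filter.mpr ⟨Finset.mem_Icc.mpr ⟨hx1.1, by omega⟩, hx2⟩
      calc off i + a i = ∑ i' ∈ insert i ((Finset.Icc 1 (i-1)).filter (fun i' => g i' = g i)), a i' := by
            rw [Finset.sum_insert hnotmem, Nat.add_comm]
        _ ≤ ∑ i' ∈ (Finset.Icc 1 m).filter (fun i' => g i' = g i), a i' :=
            Finset.sum_le_sum_of_subset hsub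
        _ ≤ B := hg2 (g i) hgk
    -- monotonicity of off along a bin
    have hoffmono : ∀ i ∈ Finset.Icc 1 m, ∀ i' ∈ Finset.Icc 1 m, i < i' → g i = g i' →
        off i + a i ≤ off i' := by
      intro i hi i' hi' hlt hgg
      have hnotmem : i ∉ (Finset.Icc 1 (i-1)).filter (fun i'' => g i'' = g i) := by
        intro h
        have := (Finset.mem_filter.mp h).1
        rw [Finset.mem_Icc] at this
        omega
      have hi1 := (Finset.mem_Icc.mp hi).1
      have hsub : insert i ((Finset.Icc 1 (i-1)).filter (fun i'' => g i'' = g i)) ⊆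
          (Finset.Icc 1 (i'-1)).filter (fun i'' => g i'' = g i') := by
        intro x hx
        rcases Finset.mem_insert.mp hx with rfl | hx
        · exact Finset.mem_filter.mpr ⟨Finset.mem_Icc.mpr ⟨hi1, by omega⟩, hgg⟩
        · obtain ⟨hx1, hx2⟩ := Finset.mem_filter.mp hx
          rw [Finset.mem_Icc] at hx1
          exact Finset.mem_filter.mpr ⟨Finset.mem_Icc.mpr ⟨hx1.1, by omega⟩, by rw [hx2]; exact hgg⟩
      calc off i + a i = ∑ i'' ∈ insert i ((Finset.Icc 1 (i-1)).filter (fun i'' => g i'' = g i)), a i'' := by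
            rw [Finset.sum_insert hnotmem, Nat.add_comm]
        _ ≤ ∑ i'' ∈ (Finset.Icc 1 (i'-1)).filter (fun i'' => g i'' = g i'), a i'' :=
            Finset.sum_le_sum_of_subset hsub
        _ = off i' := rfl
    -- bounds for pos
    have hposlow : ∀ i, ∀ j, pp a (i-1) < j → (g i - 1)*B + off i < pos i j := by
      intro i j h1
      simp only [hpos]
      omega
    have hposhigh : ∀ i ∈ Finset.Icc 1 m, ∀ j, j ≤ pp a i → pos i j ≤ g i * B := by
      intro i hi j hj
      have h1 := hoffB i hi
      have h2 := pp_succ a (Finset.mem_Icc.mp hi).1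
      have h3 := pred_mul_add (B := B) (show 1 ≤ g i from (Finset.mem_Icc.mp (hg1 i hi)).1)
      simp only [hpos]
      omega
    have hposN : ∀ i ∈ Finset.Icc 1 m, ∀ j, pp a (i-1) < j → j ≤ pp a i →
        1 ≤ pos i j ∧ pos i j ≤ B * K := by
      intro i hi j h1 h2
      have hlow := hposlow i j h1
      have hhigh := hposhigh i hi j h2
      have hgK := (Finset.mem_Icc.mp (hg1 i hi)).2
      have : g i * B ≤ K * B := Nat.mul_le_mul_right B hgK
      have hc : K * B = B * K := Nat.mul_comm _ _
      omega
    -- injectivity auxiliary: same bin ordering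
    have hgeq : ∀ i ∈ Finset.Icc 1 m, ∀ i' ∈ Finset.Icc 1 m, ∀ j j',
        pp a (i-1) < j → j ≤ pp a i → pp a (i'-1) < j' → j' ≤ pp a i' →
        pos i j = pos i' j' → g i = g i' := by
      intro i hi i' hi' j j' h1 h2 h1' h2' heq
      by_contra hgg
      have hb := hposlow i j h1
      have hb' := hposlow i' j' h1'
      have hh := hposhigh i hi j h2
      have hh' := hposhigh i' hi' j' h2'
      rcases Nat.lt_or_ge (g i) (g i') with h | h
      · have : g i * B ≤ (g i' - 1) * B := Nat.mul_le_mul_right B (by omega)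
        omega
      · have hlt : g i' < g i := by omega
        have : g i' * B ≤ (g i - 1) * B := Nat.mul_le_mul_right B (by omega)
        omega
    have hinjpos : ∀ i ∈ Finset.Icc 1 m, ∀ i' ∈ Finset.Icc 1 m, ∀ j j',
        pp a (i-1) < j → j ≤ pp a i → pp a (i'-1) < j' → j' ≤ pp a i' →
        pos i j = pos i' j' → j = j' := by
      intro i hi i' hi' j j' h1 h2 h1' h2' heq
      have hgg := hgeq i hi i' hi' j j' h1 h2 h1' h2' heq
      have hia := pp_succ a (Finset.mem_Icc.mp hi).1
      have hia' := pp_succ a (Finset.mem_Icc.mp hi').1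
      rcases lt_trichotomy i i' with h | h | h
      · exfalso
        have := hoffmono i hi i' hi' h hgg
        rw [hpos] at heq
        simp only at heq
        rw [hgg] at heq
        omega
      · subst h
        rw [hpos] at heq
        simp only at heq
        omega
      · exfalso
        have := hoffmono i' hi' i hi h hgg.symm
        rw [hpos] at heq
        simp only at heq
        rw [hgg] at heq
        omega
    -- the partial embedding
    set F : ℕ → ℕ := fun j =>
      if h : ∃ i, i ∈ Finset.Icc 1 m ∧ pp a (i-1) < j ∧ j ≤ pp a i then pos h.choose j else 0
      with hFdef
    have hF : ∀ i ∈ Finset.Icc 1 m, ∀ j, pp a (i-1) < j → j ≤ pp a i → F j = pos i j := by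
      intro i hi j h1 h2
      have hex : ∃ i, i ∈ Finset.Icc 1 m ∧ pp a (i-1) < j ∧ j ≤ pp a i := ⟨i, hi, h1, h2⟩
      have h3 : F j = pos hex.choose j := dif_pos hex
      obtain ⟨hc1, hc2, hc3⟩ := hex.choose_spec
      rw [h3, sec_unique a hc1 hi hc2 hc3 h1 h2]
    set A := Finset.Icc 1 (pp a m) with hA
    have hmapsF : ∀ j ∈ A, 1 ≤ F j ∧ F j ≤ B * K := by
      intro j hj
      rw [hA, Finset.mem_Icc] at hj
      obtain ⟨i, hi, h1, h2⟩ := exists_sec a hm hj.1 hj.2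
      rw [hF i hi j h1 h2]
      exact hposN i hi j h1 h2
    have hinjF : Set.InjOn F ↑A := by
      intro j hj j' hj' heq
      rw [hA, Finset.coe_Icc, Set.mem_Icc] at hj hj'
      obtain ⟨i, hi, h1, h2⟩ := exists_sec a hm hj.1 hj.2
      obtain ⟨i', hi', h1', h2'⟩ := exists_sec a hm hj'.1 hj'.2
      rw [hF i hi j h1 h2, hF i' hi' j' h1' h2'] at heq
      exact hinjpos i hi i' hi' j j' h1 h2 h1' h2' heq
    set U1 := Finset.Icc 1 (B * K) \ A with hU1
    set U2 := Finset.Icc 1 (B * K) \ A.image F with hU2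
    have hAsub : A ⊆ Finset.Icc 1 (B * K) := Finset.Icc_subset_Icc_right hppm
    have himsub : A.image F ⊆ Finset.Icc 1 (B * K) := by
      intro x hx
      obtain ⟨j, hj, rfl⟩ := Finset.mem_image.mp hx
      exact Finset.mem_Icc.mpr (hmapsF j hj)
    have hcardU : U1.card = U2.card := by
      rw [hU1, hU2, Finset.card_sdiff_of_subset hAsub, Finset.card_sdiff_of_subset himsub,
        Finset.card_image_of_injOn hinjF]
    set e := Finset.equivOfCardEq hcardU with he
    set f : ℕ → ℕ := fun j => if h : j ∈ U1 then ((e ⟨j, h⟩ : U2) : ℕ) else F j with hfdef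
    have hAmem : ∀ x, 1 ≤ x → x ≤ B * K → x ∉ U1 → x ∈ A := by
      intro x h1 h2 h3
      by_contra hA'
      exact h3 (Finset.mem_sdiff.mpr ⟨Finset.mem_Icc.mpr ⟨h1, h2⟩, hA'⟩)
    have hfsec : ∀ i ∈ Finset.Icc 1 m, ∀ j, pp a (i-1) < j → j ≤ pp a i → f j = pos i j := by
      intro i hi j h1 h2
      have hjA : j ∈ A := Finset.mem_Icc.mpr ⟨by omega, h2.trans (pp_mono a (Finset.mem_Icc.mp hi).2)⟩
      have hjU : j ∉ U1 := by
        rw [hU1, Finset.mem_sdiff]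
        exact fun h => h.2 hjA
      rw [hfdef]
      simp only
      rw [dif_neg hjU]
      exact hF i hi j h1 h2
    refine ⟨f, ?_, ?_⟩
    · have hfin : (Set.Icc 1 (B * K)).Finite := Set.finite_Icc _ _
      have hmaps : Set.MapsTo f (Set.Icc 1 (B * K)) (Set.Icc 1 (B * K)) := by
        intro j hj
        rw [Set.mem_Icc] at hj
        rw [hfdef]; simp only
        by_cases h : j ∈ U1
        · rw [dif_pos h]
          have h2 := Finset.mem_sdiff.mp (e ⟨j, h⟩).2
          have := Finset.mem_Icc.mp h2.1
          exact Set.mem_Icc.mpr this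
        · rw [dif_neg h]
          exact Set.mem_Icc.mpr (hmapsF j (hAmem j hj.1 hj.2 h))
      have hinj : Set.InjOn f (Set.Icc 1 (B * K)) := by
        intro j hj j' hj' heq
        rw [Set.mem_Icc] at hj hj'
        rw [hfdef] at heq
        simp only at heq
        by_cases h : j ∈ U1 <;> by_cases h' : j' ∈ U1
        · rw [dif_pos h, dif_pos h'] at heq
          have := e.injective (Subtype.coe_injective heq)
          exact congrArg Subtype.val this
        · exfalso
          rw [dif_pos h, dif_neg h'] at heq
          have h2 := Finset.mem_sdiff.mp (e ⟨j, h⟩).2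
          exact h2.2 (heq ▸ Finset.mem_image_of_mem F (hAmem j' hj'.1 hj'.2 h'))
        · exfalso
          rw [dif_neg h, dif_pos h'] at heq
          have h2 := Finset.mem_sdiff.mp (e ⟨j', h'⟩).2
          exact h2.2 (heq ▸ Finset.mem_image_of_mem F (hAmem j hj.1 hj.2 h))
        · rw [dif_neg h, dif_neg h'] at heq
          have hjA := hAmem j hj.1 hj.2 h
          have hjA' := hAmem j' hj'.1 hj'.2 h'
          exact hinjF (Finset.mem_coe.mpr hjA) (Finset.mem_coe.mpr hjA') heq
      exact (hfin.injOn_iff_bijOn_of_mapsTo hmaps).mp hinj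
    · intro k hk
      rw [Finset.mem_Icc] at hk
      by_cases hdvd : B ∣ k
      · rw [if_pos hdvd]
        refine Nat.le_zero.mpr (Finset.sum_eq_zero ?_)
        intro j hj
        split_ifs with hseg hdem
        · exfalso
          obtain ⟨i, hi, hd1, hd2⟩ := hdem
          rw [pp_def a (i-1)] at hd1 hd2
          have hps := pp_succ a (Finset.mem_Icc.mp hi).1
          have h2 : j + 1 ≤ pp a i := by omega
          have e1 : f j = pos i j := hfsec i hi j (by omega) (by omega)
          have e2 : f (j+1) = pos i (j+1) := hfsec i hi (j+1) (by omega) h2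
          have e3 : pos i (j+1) = pos i j + 1 := by simp only [hpos]; omega
          rw [e1, e2, e3] at hseg
          have hkeq : k = pos i j := by omega
          have hlow : (g i - 1)*B + off i < pos i j := hposlow i j (by omega)
          have hhigh : pos i j + 1 ≤ g i * B := by rw [← e3]; exact hposhigh i hi (j+1) h2
          obtain ⟨t, ht⟩ := hdvd
          have hgi1 : 1 ≤ g i := (Finset.mem_Icc.mp (hg1 i hi)).1
          have h5 : g i ≤ t := by
            by_contra hcon
            push_neg at hcon
            have h6 : B * t ≤ B * (g i - 1) := Nat.mul_le_mul_left B (by omega)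
            have h7 : B * (g i - 1) = (g i - 1) * B := Nat.mul_comm _ _
            omega
          have h6 : B * (g i) ≤ B * t := Nat.mul_le_mul_left B h5
          have h7 : B * (g i) = g i * B := Nat.mul_comm _ _
          omega
        · rfl
        · rfl
      · rw [if_neg hdvd]
        have hmid : (∑ j ∈ Finset.Icc 1 (B * K - 1),
            if (min (f j) (f (j + 1)) ≤ k ∧ k < max (f j) (f (j + 1))) then
              (if ∃ i ∈ Finset.Icc 1 m,
                  (∑ l ∈ Finset.Icc 1 (i - 1), a l) + 1 ≤ j ∧
                  j + 1 ≤ (∑ l ∈ Finset.Icc 1 (i - 1), a l) + a i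
               then 1 else 0)
            else 0) ≤
            ∑ j ∈ Finset.Icc 1 (B * K - 1), ∑ i ∈ Finset.Icc 1 m,
              (if pp a (i-1) + 1 ≤ j ∧ j + 1 ≤ pp a (i-1) + a i then 1 else 0) := by
          refine Finset.sum_le_sum (fun j _ => ?_)
          split_ifs with h1 h2
          · obtain ⟨i, hi, hd1, hd2⟩ := h2
            have h4 : (if pp a (i-1) + 1 ≤ j ∧ j + 1 ≤ pp a (i-1) + a i then (1:ℕ) else 0) ≤
                ∑ i' ∈ Finset.Icc 1 m,
                  (if pp a (i'-1) + 1 ≤ j ∧ j + 1 ≤ pp a (i'-1) + a i' then 1 else 0) :=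
              Finset.single_le_sum
                (f := fun i' => if pp a (i'-1) + 1 ≤ j ∧ j + 1 ≤ pp a (i'-1) + a i' then (1:ℕ) else 0)
                (fun _ _ => Nat.zero_le _) hi
            rw [if_pos ⟨hd1, hd2⟩] at h4
            exact h4
          · exact Nat.zero_le _
          · exact Nat.zero_le _
        refine hmid.trans ?_
        rw [Finset.sum_comm]
        refine Finset.sum_le_sum (fun i hi => ?_)
        have hps := pp_succ a (Finset.mem_Icc.mp hi).1
        have hai := ha i hi
        have hcf : (∑ j ∈ Finset.Icc 1 (B * K - 1),
            (if pp a (i-1) + 1 ≤ j ∧ j + 1 ≤ pp a (i-1) + a i then 1 else 0)) =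
            ((Finset.Icc 1 (B * K - 1)).filter
              (fun j => pp a (i-1) + 1 ≤ j ∧ j + 1 ≤ pp a (i-1) + a i)).card := by
          rw [Finset.card_filter]
        rw [hcf]
        have hsub2 : (Finset.Icc 1 (B * K - 1)).filter
              (fun j => pp a (i-1) + 1 ≤ j ∧ j + 1 ≤ pp a (i-1) + a i) ⊆
            Finset.Icc (pp a (i-1)+1) (pp a i - 1) := by
          intro j hj
          obtain ⟨hjI, hd1, hd2⟩ := Finset.mem_filter.mp hj
          exact Finset.mem_Icc.mpr ⟨hd1, by omega⟩
        refine (Finset.card_le_card hsub2).trans ?_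
        rw [Nat.card_Icc]
        omega
  · rintro ⟨f, hbij, hcap⟩
    -- define g via the block of the image of the first vertex of each section
    have hfmem : ∀ j, 1 ≤ j → j ≤ B * K → 1 ≤ f j ∧ f j ≤ B * K := by
      intro j h1 h2
      have := hbij.mapsTo (Set.mem_Icc.mpr ⟨h1, h2⟩)
      rwa [Set.mem_Icc] at this
    have hfinj := hbij.injOn
    -- key: adjacent vertices of a section land in the same block
    have key : ∀ i ∈ Finset.Icc 1 m, ∀ j, pp a (i-1) + 1 ≤ j → j + 1 ≤ pp a i →
        blockOf B (f (j+1)) = blockOf B (f j) := by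
      intro i hi j hj1 hj2
      obtain ⟨hi1, hi2⟩ := Finset.mem_Icc.mp hi
      have hpiN : pp a i ≤ B * K := (pp_mono a hi2).trans hppm
      have hfj := hfmem j (by omega) (by omega)
      have hfj1 := hfmem (j+1) (by omega) (by omega)
      by_contra hne
      have hfne : f j ≠ f (j+1) := by
        intro h
        have := hfinj (Set.mem_Icc.mpr ⟨by omega, by omega⟩)
          (Set.mem_Icc.mpr ⟨by omega, by omega⟩) h
        omega
      set u := min (f j) (f (j+1)) with hu
      set v := max (f j) (f (j+1)) with hv
      have huv : u < v := by omega
      have hbuv : blockOf B u < blockOf B v := by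
        have hne' : blockOf B u ≠ blockOf B v := by
          rcases le_total (f j) (f (j+1)) with h | h
          · rw [hu, hv, min_eq_left h, max_eq_right h]; exact fun hh => hne hh.symm
          · rw [hu, hv, min_eq_right h, max_eq_left h]; exact hne
        exact lt_of_le_of_ne (blockOf_mono huv.le) hne'
      obtain ⟨hu_le, hlt_v⟩ := blockOf_gap hB (by omega) hbuv
      set k := blockOf B u * B with hk
      have hkB : B ≤ k := by
        have : 1 * B ≤ blockOf B u * B := Nat.mul_le_mul_right B (blockOf_pos B u)
        omega
      have hkIcc : k ∈ Finset.Icc 1 (B * K - 1) := Finset.mem_Icc.mpr ⟨by omega, by omega⟩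
      have hc := hcap k hkIcc
      rw [if_pos (dvd_mul_left B (blockOf B u))] at hc
      have hzero := Finset.sum_eq_zero_iff.mp (Nat.le_zero.mp hc) j
        (Finset.mem_Icc.mpr ⟨by omega, by omega⟩)
      have hdem : ∃ i' ∈ Finset.Icc 1 m,
          (∑ l ∈ Finset.Icc 1 (i' - 1), a l) + 1 ≤ j ∧
          j + 1 ≤ (∑ l ∈ Finset.Icc 1 (i' - 1), a l) + a i' := by
        refine ⟨i, hi, hj1, ?_⟩
        have := pp_succ a hi1
        show j + 1 ≤ pp a (i-1) + a i
        omega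
      rw [if_pos ⟨hu_le, hlt_v⟩, if_pos hdem] at hzero
      exact one_ne_zero hzero
    -- sections are mapped inside a single block
    have hsame : ∀ i ∈ Finset.Icc 1 m, ∀ j, pp a (i-1) + 1 ≤ j → j ≤ pp a i →
        blockOf B (f j) = blockOf B (f (pp a (i-1) + 1)) := by
      intro i hi j hj1
      induction j, hj1 using Nat.le_induction with
      | base => intro _; rfl
      | succ n hn ih =>
        intro h2
        rw [key i hi n hn h2]
        exact ih (by omega)
    refine ⟨fun i => blockOf B (f (pp a (i-1) + 1)), ?_, ?_⟩
    · intro i hi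
      obtain ⟨hi1, hi2⟩ := Finset.mem_Icc.mp hi
      have hps := pp_succ a hi1
      have hai := ha i hi
      have hpiN : pp a i ≤ B * K := (pp_mono a hi2).trans hppm
      have hf := hfmem (pp a (i-1) + 1) (by omega) (by omega)
      exact Finset.mem_Icc.mpr ⟨blockOf_pos _ _, blockOf_le_K hB hK hf.2⟩
    · intro k hk
      obtain ⟨hk1, hk2⟩ := Finset.mem_Icc.mp hk
      set S := (Finset.Icc 1 m).filter
        (fun i => blockOf B (f (pp a (i-1) + 1)) = k) with hS
      set T := S.biUnion (fun i => Finset.Icc (pp a (i-1)+1) (pp a i)) with hT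
      have hTsub : ∀ j ∈ T, 1 ≤ j ∧ j ≤ B * K := by
        intro j hj
        obtain ⟨i, hiS, hjI⟩ := Finset.mem_biUnion.mp hj
        obtain ⟨hiIcc, _⟩ := Finset.mem_filter.mp hiS
        obtain ⟨h1, h2⟩ := Finset.mem_Icc.mp hjI
        have : pp a i ≤ B * K := (pp_mono a (Finset.mem_Icc.mp hiIcc).2).trans hppm
        omega
      have hcardT : T.card = ∑ i ∈ S, a i := by
        rw [hT, Finset.card_biUnion]
        · refine Finset.sum_congr rfl (fun i hiS => ?_)
          have hi1 := (Finset.mem_Icc.mp (Finset.mem_filter.mp hiS).1).1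
          have := pp_succ a hi1
          rw [Nat.card_Icc]; omega
        · intro i hi i' hi' hne
          have hi1 := (Finset.mem_Icc.mp (Finset.mem_filter.mp hi).1).1
          have hi'1 := (Finset.mem_Icc.mp (Finset.mem_filter.mp hi').1).1
          rw [Function.onFun, Finset.disjoint_left]
          intro x hx hx'
          obtain ⟨hx1, hx2⟩ := Finset.mem_Icc.mp hx
          obtain ⟨hx1', hx2'⟩ := Finset.mem_Icc.mp hx'
          rcases Nat.lt_or_ge i i' with h | h
          · have := pp_mono a (show i ≤ i' - 1 by omega); omega
          · have hlt : i' < i := by omega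
            have := pp_mono a (show i' ≤ i - 1 by omega); omega
      have himg : T.image f ⊆ Finset.Icc ((k-1)*B+1) (k*B) := by
        intro x hx
        obtain ⟨j, hjT, rfl⟩ := Finset.mem_image.mp hx
        obtain ⟨i, hiS, hjI⟩ := Finset.mem_biUnion.mp hjT
        obtain ⟨hiIcc, hgik⟩ := Finset.mem_filter.mp hiS
        obtain ⟨hj1, hj2⟩ := Finset.mem_Icc.mp hjI
        have hbk : blockOf B (f j) = k := by
          rw [hsame i hiIcc j hj1 hj2]; exact hgik
        have hjb := hTsub j hjT
        have hfj := hfmem j hjb.1 hjb.2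
        exact Finset.mem_Icc.mpr (blockOf_eq_iff hB hfj.1 hbk)
      have hinjT : Set.InjOn f ↑T := by
        refine hfinj.mono (fun j hj => ?_)
        have := hTsub j hj
        exact Set.mem_Icc.mpr this
      calc ∑ i ∈ S, a i = T.card := hcardT.symm
        _ = (T.image f).card := (Finset.card_image_of_injOn hinjT).symm
        _ ≤ (Finset.Icc ((k-1)*B+1) (k*B)).card := Finset.card_le_card himg
        _ = B := by
            have := pred_mul_add (B := B) hk1
            rw [Nat.card_Icc]; omega
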